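/- There is no pair of functions: for each vertex v of the 9-cycle graph (drawn as a triangle with corner vertices 1,2,3 and two chain vertices per side), an output function h_v taking values in {±1} depending on v's Pauli setting and the Pauli settings of v's two neighbors, such that the products of outputs over the support of the submeasurements C'_1,…,C'_4, C̃'_1,…,C̃'_6 (given in Table I of the paper, with corner settings realizing the GHZ constraints XXX = −1, XYY = YXY = YYX = +1 and the six decoy constraints all = +1) reproduce the quantum-predicted signs (−1, +1, +1, +1, +1, +1, +1, +1, +1, +1). -/
import Mathlib


inductive Pauli | I | X | Y | Z
deriving DecidableEq

open Pauli

/-- The ten Pauli measurements of Table I on the 9-cycle (the `d = 1` inflated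
triangle), vertices ordered `1, 1₍₁,₂₎, 2₍₁,₂₎, 2, 1₍₂,₃₎, 2₍₂,₃₎, 3, 1₍₃,₁₎, 2₍₃,₁₎`
around the cycle. -/
def M8 : Fin 10 → Fin 9 → Pauli :=
  ![![X, X, X, Z, X, X, Z, X, X],
    ![Z, X, X, X, X, X, Z, X, X],
    ![Z, X, X, Z, X, X, X, X, X],
    ![X, X, X, X, X, X, X, X, X],
    ![X, X, X, Y, X, X, Y, X, X],
    ![Z, X, X, Y, X, X, Y, X, X],
    ![Y, X, X, X, X, X, Y, X, X],
    ![Y, X, X, Z, X, X, Y, X, X],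
    ![Y, X, X, Y, X, X, X, X, X],
    ![Y, X, X, Y, X, X, Z, X, X]]

/-- Which outputs are kept in the corresponding submeasurements `C'_k`. -/
def K8 : Fin 10 → Fin 9 → Bool :=
  ![![true, false, true, true, false, false, true, true, false],
    ![true, true, false, true, false, true, true, false, false],
    ![true, false, false, true, true, false, true, false, true],
    ![true, true, true, true, true, true, true, true, true],
    ![false, true, false, true, true, true, true, false, true],
    ![false, true, false, true, true, true, true, false, true],
    ![true, false, true, false, true, false, true, true, true],
    ![true, false, true, false, true, false, true, true, true],
    ![true, true, true, true, false, true, false, true, false],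
    ![true, true, true, true, false, true, false, true, false]]

/-- The quantum-predicted signs of the ten submeasurements. -/
def s8 : Fin 10 → ℤ := ![-1, 1, 1, 1, 1, 1, 1, 1, 1, 1]


private lemma dv0' {α : Type*} (a b c d e f g h i j : α) : (![a,b,c,d,e,f,g,h,i,j] : Fin 10 → α) 0 = a := rfl
private lemma dv1' {α : Type*} (a b c d e f g h i j : α) : (![a,b,c,d,e,f,g,h,i,j] : Fin 10 → α) 1 = b := rfl
private lemma dv2' {α : Type*} (a b c d e f g h i j : α) : (![a,b,c,d,e,f,g,h,i,j] : Fin 10 → α) 2 = c := rfl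
private lemma dv3' {α : Type*} (a b c d e f g h i j : α) : (![a,b,c,d,e,f,g,h,i,j] : Fin 10 → α) 3 = d := rfl
private lemma dv4' {α : Type*} (a b c d e f g h i j : α) : (![a,b,c,d,e,f,g,h,i,j] : Fin 10 → α) 4 = e := rfl
private lemma dv5' {α : Type*} (a b c d e f g h i j : α) : (![a,b,c,d,e,f,g,h,i,j] : Fin 10 → α) 5 = f := rfl
private lemma dv6' {α : Type*} (a b c d e f g h i j : α) : (![a,b,c,d,e,f,g,h,i,j] : Fin 10 → α) 6 = g := rfl
private lemma dv7' {α : Type*} (a b c d e f g h i j : α) : (![a,b,c,d,e,f,g,h,i,j] : Fin 10 → α) 7 = h := rfl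
private lemma dv8' {α : Type*} (a b c d e f g h i j : α) : (![a,b,c,d,e,f,g,h,i,j] : Fin 10 → α) 8 = i := rfl
private lemma dv9' {α : Type*} (a b c d e f g h i j : α) : (![a,b,c,d,e,f,g,h,i,j] : Fin 10 → α) 9 = j := rfl

private lemma prod9 (f : Fin 9 → ℤ) :
    (∏ v : Fin 9, f v) = f 0 * f 1 * f 2 * f 3 * f 4 * f 5 * f 6 * f 7 * f 8 := by
  rw [Fin.prod_univ_castSucc, Fin.prod_univ_eight]; rfl

private lemma prod10 (f : Fin 10 → ℤ) :
    (∏ k : Fin 10, f k) = f 0 * f 1 * f 2 * f 3 * f 4 * f 5 * f 6 * f 7 * f 8 * f 9 := by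
  rw [Fin.prod_univ_castSucc, prod9]; rfl

set_option maxHeartbeats 2000000 in
/-- No 1-LHV* model on the 9-cycle (each vertex's ±1 output depending on its own
Pauli setting and those of its two neighbours) reproduces the quantum-predicted
signs of the ten submeasurements of Table I. -/
theorem stmt8 : ¬ ∃ h : Fin 9 → Pauli → Pauli → Pauli → ℤ,
    (∀ v a b c, h v a b c = 1 ∨ h v a b c = -1) ∧
    ∀ k : Fin 10,
      (∏ v : Fin 9, if K8 k v then h v (M8 k v) (M8 k (v - 1)) (M8 k (v + 1)) else 1)
        = s8 k := by
  rintro ⟨h, hpm, hc⟩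
  have sq : ∀ v a b c, h v a b c * h v a b c = 1 := by
    intro v a b c; rcases hpm v a b c with e | e <;> rw [e] <;> norm_num
  have p2 : ∀ v a b c, h v a b c ^ 2 = 1 := by
    intro v a b c; rw [pow_two]; exact sq v a b c
  have p4 : ∀ v a b c, h v a b c ^ 4 = 1 := by
    intro v a b c; nlinarith [p2 v a b c]
  have inner0 : (∏ k : Fin 10, if K8 k 0 then h 0 (M8 k 0) (M8 k (0-1)) (M8 k (0+1)) else 1) = 1 := by
    rw [prod10]
    show h 0 X X X * h 0 Z X X * h 0 Z X X * h 0 X X X * 1 * 1 * h 0 Y X X * h 0 Y X X * h 0 Y X X * h 0 Y X X = 1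
    ring_nf
    simp [p2, p4, sq]
  have inner1 : (∏ k : Fin 10, if K8 k 1 then h 1 (M8 k 1) (M8 k (1-1)) (M8 k (1+1)) else 1) = 1 := by
    rw [prod10]
    show 1 * h 1 X Z X * 1 * h 1 X X X * h 1 X X X * h 1 X Z X * 1 * 1 * h 1 X Y X * h 1 X Y X = 1
    ring_nf
    simp [p2, p4, sq]
  have inner2 : (∏ k : Fin 10, if K8 k 2 then h 2 (M8 k 2) (M8 k (2-1)) (M8 k (2+1)) else 1) = 1 := by
    rw [prod10]
    show h 2 X X Z * 1 * 1 * h 2 X X X * 1 * 1 * h 2 X X X * h 2 X X Z * h 2 X X Y * h 2 X X Y = 1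
    ring_nf
    simp [p2, p4, sq]
  have inner3 : (∏ k : Fin 10, if K8 k 3 then h 3 (M8 k 3) (M8 k (3-1)) (M8 k (3+1)) else 1) = 1 := by
    rw [prod10]
    show h 3 Z X X * h 3 X X X * h 3 Z X X * h 3 X X X * h 3 Y X X * h 3 Y X X * 1 * 1 * h 3 Y X X * h 3 Y X X = 1
    ring_nf
    simp [p2, p4, sq]
  have inner4 : (∏ k : Fin 10, if K8 k 4 then h 4 (M8 k 4) (M8 k (4-1)) (M8 k (4+1)) else 1) = 1 := by
    rw [prod10]
    show 1 * 1 * h 4 X Z X * h 4 X X X * h 4 X Y X * h 4 X Y X * h 4 X X X * h 4 X Z X * 1 * 1 = 1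
    ring_nf
    simp [p2, p4, sq]
  have inner5 : (∏ k : Fin 10, if K8 k 5 then h 5 (M8 k 5) (M8 k (5-1)) (M8 k (5+1)) else 1) = 1 := by
    rw [prod10]
    show 1 * h 5 X X Z * 1 * h 5 X X X * h 5 X X Y * h 5 X X Y * 1 * 1 * h 5 X X X * h 5 X X Z = 1
    ring_nf
    simp [p2, p4, sq]
  have inner6 : (∏ k : Fin 10, if K8 k 6 then h 6 (M8 k 6) (M8 k (6-1)) (M8 k (6+1)) else 1) = 1 := by
    rw [prod10]
    show h 6 Z X X * h 6 Z X X * h 6 X X X * h 6 X X X * h 6 Y X X * h 6 Y X X * h 6 Y X X * h 6 Y X X * 1 * 1 = 1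
    ring_nf
    simp [p2, p4, sq]
  have inner7 : (∏ k : Fin 10, if K8 k 7 then h 7 (M8 k 7) (M8 k (7-1)) (M8 k (7+1)) else 1) = 1 := by
    rw [prod10]
    show h 7 X Z X * 1 * 1 * h 7 X X X * 1 * 1 * h 7 X Y X * h 7 X Y X * h 7 X X X * h 7 X Z X = 1
    ring_nf
    simp [p2, p4, sq]
  have inner8 : (∏ k : Fin 10, if K8 k 8 then h 8 (M8 k 8) (M8 k (8-1)) (M8 k (8+1)) else 1) = 1 := by
    rw [prod10]
    show 1 * 1 * h 8 X X Z * h 8 X X X * h 8 X X X * h 8 X X Z * h 8 X X Y * h 8 X X Y * 1 * 1 = 1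
    ring_nf
    simp [p2, p4, sq]
  have inner : ∀ v : Fin 9,
      (∏ k : Fin 10, if K8 k v then h v (M8 k v) (M8 k (v-1)) (M8 k (v+1)) else 1) = 1 := by
    intro v
    fin_cases v
    · exact inner0
    · exact inner1
    · exact inner2
    · exact inner3
    · exact inner4
    · exact inner5
    · exact inner6
    · exact inner7
    · exact inner8
  have big : (∏ k : Fin 10, ∏ v : Fin 9,
      if K8 k v then h v (M8 k v) (M8 k (v-1)) (M8 k (v+1)) else 1) = ∏ k : Fin 10, s8 k :=
    Finset.prod_congr rfl fun k _ => hc k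
  rw [Finset.prod_comm] at big
  rw [prod9] at big
  rw [inner 0, inner 1, inner 2, inner 3, inner 4, inner 5, inner 6, inner 7, inner 8, prod10] at big
  norm_num [s8, dv0', dv1', dv2', dv3', dv4', dv5', dv6', dv7', dv8', dv9'] at big
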